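/- For every λletrec-term L, the sequent ()L is derivable in the unguarded proof system ug-Reg⁺_letrec (the variant of Reg⁺_letrec whose FIX_letrec rule lacks the guardedness side-condition). Moreover, the derivation can be constructed deterministically bottom-up following the term structure of L. -/

import Mathlib

/-- Node labels of (nameless, de Bruijn) infinite λ-terms. -/
inductive Lab : Type
  | lam : Lab
  | app : Lab
  | var : ℕ → Lab
deriving DecidableEq

/-- Which child positions a node with a given label may have. -/
def okChild : Lab → Bool → Prop
  | .lam, false => True
  | .app, _ => True
  | _, _ => False

/-- Infinite λ-terms (in nameless de Bruijn style), represented as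
labelled possibly-infinite binary trees given by their labelling function. -/
structure Tm : Type where
  lab : List Bool → Option Lab
  root : (lab []).isSome
  cons : ∀ p b, (lab (p ++ [b])).isSome ↔ ∃ l, lab p = some l ∧ okChild l b

namespace Tm

/-- Subterm at a position. -/
def sub (t : Tm) (p : List Bool) (h : (t.lab p).isSome) : Tm where
  lab q := t.lab (p ++ q)
  root := by simpa using h
  cons q b := by
    have h' := t.cons (p ++ q) b
    simpa [List.append_assoc] using h'

/-- Auxiliary: number of λ-labels strictly above, accumulating the prefix. -/
def ldepthAux (t : Tm) : List Bool → List Bool → ℕ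
  | _, [] => 0
  | pre, b :: p => (if t.lab pre = some .lam then 1 else 0) + t.ldepthAux (pre ++ [b]) p

/-- The number of λ-nodes strictly above position `p` in `t`. -/
def ldepth (t : Tm) (p : List Bool) : ℕ := t.ldepthAux [] p

end Tm

def shiftLab (σ : ℕ → ℕ) : Lab → Lab
  | .var k => .var (σ k)
  | l => l

theorem okChild_shiftLab (σ : ℕ → ℕ) (l : Lab) (b : Bool) :
    okChild (shiftLab σ l) b ↔ okChild l b := by
  cases l <;> cases b <;> simp [shiftLab, okChild]

/-- Relabel all variable nodes, depending on their λ-depth. -/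
def Tm.mapVar (t : Tm) (σ : ℕ → ℕ → ℕ) : Tm where
  lab p := (t.lab p).map (shiftLab (σ (t.ldepth p)))
  root := by
    have h := t.root
    cases hl : t.lab [] with
    | none => rw [hl] at h; simp at h
    | some l => simp [hl]
  cons p b := by
    constructor
    · intro hs
      have hs' : (t.lab (p ++ [b])).isSome := by simpa using hs
      obtain ⟨l', hl', hok⟩ := (t.cons p b).1 hs'
      exact ⟨shiftLab (σ (t.ldepth p)) l', by simp [hl'],
        (okChild_shiftLab _ _ _).2 hok⟩
    · rintro ⟨l', hl', hok⟩
      obtain ⟨l, hl, hfl⟩ := Option.map_eq_some_iff.mp (by simpa using hl')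
      have hok' : okChild l b := by
        have := hfl ▸ hok
        exact (okChild_shiftLab (σ (t.ldepth p)) l b).1 this
      have hs : (t.lab (p ++ [b])).isSome := (t.cons p b).2 ⟨l, hl, hok'⟩
      simpa using hs

/-- The term consisting of a single variable node with index 0. -/
def var0Tm : Tm where
  lab p := if p = [] then some (.var 0) else none
  root := by simp
  cons p b := by
    constructor
    · intro h
      simp only [List.append_eq_nil_iff] at h
      simp at h
    · rintro ⟨l, hl, hok⟩
      by_cases hp : p = []
      · subst hp
        simp only [if_pos rfl, Option.some.injEq] at hl
        cases hl
        cases b <;> simp [okChild] at hok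
      · simp [hp] at hl

/-- The last-but-`j` abstraction-prefix variable occurs in `t`
(at λ-depth `d` inside the term it has de Bruijn index `j + d`). -/
def OccursJ (j : ℕ) (t : Tm) : Prop := ∃ p, t.lab p = some (.var (j + t.ldepth p))

/-- Remove the prefix variable with base index `j` from the de Bruijn indexing. -/
def downJ (j : ℕ) (t : Tm) : Tm := t.mapVar (fun d k => if j + d < k then k - 1 else k)

/-- The last abstraction-prefix variable occurs. -/
def occurs0 : Tm → Prop := OccursJ 0

/-- Remove the (vacuous) last abstraction-prefix variable. -/
def down0 : Tm → Tm := downJ 0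

/-- `t` has no free variables pointing outside the term itself. -/
def ClosedTm (t : Tm) : Prop := ∀ p k, t.lab p = some (.var k) → k < t.ldepth p

/-- Sequents: a prefix length together with an infinite λ-term. -/
abbrev TSeq : Type := ℕ × Tm

/-- λ-decomposition step of the ARS `Reg⁺`. -/
def SLam (s s' : TSeq) : Prop :=
  s.2.lab [] = some .lam ∧ s'.1 = s.1 + 1 ∧
    ∃ h : (s.2.lab [false]).isSome, s'.2 = s.2.sub [false] h

/-- Left application-decomposition step. -/
def SApp0 (s s' : TSeq) : Prop :=
  s.2.lab [] = some .app ∧ s'.1 = s.1 ∧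
    ∃ h : (s.2.lab [false]).isSome, s'.2 = s.2.sub [false] h

/-- Right application-decomposition step. -/
def SApp1 (s s' : TSeq) : Prop :=
  s.2.lab [] = some .app ∧ s'.1 = s.1 ∧
    ∃ h : (s.2.lab [true]).isSome, s'.2 = s.2.sub [true] h

/-- Vacuous-prefix removal step (removal of the last prefix variable). -/
def SDel (s s' : TSeq) : Prop :=
  s.1 = s'.1 + 1 ∧ ¬ occurs0 s.2 ∧ s'.2 = down0 s.2

/-- The scope⁺-decomposition ARS `Reg⁺` on prefixed infinite λ-terms. -/
def Step (s s' : TSeq) : Prop := SLam s s' ∨ SApp0 s s' ∨ SApp1 s s' ∨ SDel s s'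

/-- A (scope⁺-delimiting) strategy for the ARS `Reg⁺`: a sub-ARS with the
same objects and the same normal forms. -/
def Strategy (S : TSeq → TSeq → Prop) : Prop :=
  (∀ a b, S a b → Step a b) ∧ (∀ a, (∃ b, Step a b) → ∃ b, S a b)

/-- An infinite λ-term is strongly regular if some scope⁺-delimiting strategy
reaches only finitely many sequents from it. -/
def StronglyRegular (M : Tm) : Prop :=
  ∃ S : TSeq → TSeq → Prop, Strategy S ∧ {s | Relation.ReflTransGen S (0, M) s}.Finite

/-- λletrec-terms in de Bruijn style: a `letrec` with binding group `bs` binds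
`bs.length` recursion variables in all of `bs` and in the body; `cst` are the
fresh constants used by the rule `FIX_letrec`. -/
inductive LTm : Type
  | var : ℕ → LTm
  | lam : LTm → LTm
  | app : LTm → LTm → LTm
  | letrec : List LTm → LTm → LTm
  | cst : ℕ → LTm

namespace LTm

/-- Does the constant `c` occur? -/
def usesCst (c : ℕ) : LTm → Bool
  | .var _ => false
  | .lam t => usesCst c t
  | .app t u => usesCst c t || usesCst c u
  | .letrec bs b => (bs.attach.map fun x => usesCst c x.1).any id || usesCst c b
  | .cst i => i == c
decreasing_by
  all_goals simp_wf
  all_goals first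
    | (have := List.sizeOf_lt_of_mem x.2; omega)
    | omega

/-- Does the free variable with (relative) index `i` occur? -/
def occursIdx (i : ℕ) : LTm → Bool
  | .var k => k == i
  | .lam t => occursIdx (i + 1) t
  | .app t u => occursIdx i t || occursIdx i u
  | .letrec bs b =>
      (bs.attach.map fun x => occursIdx (i + bs.length) x.1).any id ||
        occursIdx (i + bs.length) b
  | .cst _ => false
decreasing_by
  all_goals simp_wf
  all_goals first
    | (have := List.sizeOf_lt_of_mem x.2; omega)
    | omega

/-- Remove the free variable with index `i` from the de Bruijn indexing
(decrement all indices above it). -/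
def downIdx (i : ℕ) : LTm → LTm
  | .var k => if i < k then .var (k - 1) else .var k
  | .lam t => .lam (downIdx (i + 1) t)
  | .app t u => .app (downIdx i t) (downIdx i u)
  | .letrec bs b =>
      .letrec (bs.attach.map fun x => downIdx (i + bs.length) x.1)
        (downIdx (i + bs.length) b)
  | .cst c => .cst c
decreasing_by
  all_goals simp_wf
  all_goals first
    | (have := List.sizeOf_lt_of_mem x.2; omega)
    | omega

/-- Substitute the constants `cs` for the `cs.length` outermost-bound
variables (the recursion variables of a letrec binding group), shifting the
remaining free variables down accordingly. -/
def substC (cs : List ℕ) (d : ℕ) : LTm → LTm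
  | .var k =>
      if k < d then .var k
      else if h : k - d < cs.length then .cst (cs.get ⟨k - d, h⟩)
      else .var (k - cs.length)
  | .lam t => .lam (substC cs (d + 1) t)
  | .app t u => .app (substC cs d t) (substC cs d u)
  | .letrec bs b =>
      .letrec (bs.attach.map fun x => substC cs (d + bs.length) x.1)
        (substC cs (d + bs.length) b)
  | .cst c => .cst c
decreasing_by
  all_goals simp_wf
  all_goals first
    | (have := List.sizeOf_lt_of_mem x.2; omega)
    | omega

/-- All free variables have index below `d`. -/
def closedAt (d : ℕ) : LTm → Bool
  | .var k => k < d
  | .lam t => closedAt (d + 1) t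
  | .app t u => closedAt d t && closedAt d u
  | .letrec bs b =>
      (bs.attach.map fun x => closedAt (d + bs.length) x.1).all id &&
        closedAt (d + bs.length) b
  | .cst _ => true
decreasing_by
  all_goals simp_wf
  all_goals first
    | (have := List.sizeOf_lt_of_mem x.2; omega)
    | omega

/-- No constants occur. -/
def noCst : LTm → Bool
  | .var _ => true
  | .lam t => noCst t
  | .app t u => noCst t && noCst u
  | .letrec bs b => (bs.attach.map fun x => noCst x.1).all id && noCst b
  | .cst _ => false
decreasing_by
  all_goals simp_wf
  all_goals first
    | (have := List.sizeOf_lt_of_mem x.2; omega)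
    | omega

end LTm

/-- Sequents of the λletrec proof systems: a prefix length and a λletrec-term. -/
abbrev LSeq : Type := ℕ × LTm

/-- Contexts of marked assumptions `(x⃗) c_f`, recorded as pairs of the prefix
length and the identifier of the fresh constant. -/
abbrev LCtx : Type := List (ℕ × ℕ)

/-- Natural-deduction derivations of the proof system `ug-Reg⁺_letrec` on
λletrec-terms (the guardedness side-condition of `Reg⁺_letrec` and the
prefix-length side-condition are recorded separately). -/
inductive LDeriv : LCtx → LSeq → Type
  | assum (Γ : LCtx) (i : Fin Γ.length) :
      LDeriv Γ ((Γ.get i).1, .cst (Γ.get i).2)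
  | ax (Γ : LCtx) (n : ℕ) (h : 1 ≤ n) : LDeriv Γ (n, .var 0)
  | lam (Γ : LCtx) (n : ℕ) (t : LTm) (D : LDeriv Γ (n + 1, t)) :
      LDeriv Γ (n, .lam t)
  | app (Γ : LCtx) (n : ℕ) (t u : LTm)
      (D0 : LDeriv Γ (n, t)) (D1 : LDeriv Γ (n, u)) : LDeriv Γ (n, .app t u)
  | del (Γ : LCtx) (n : ℕ) (t : LTm) (hocc : t.occursIdx 0 = false)
      (D : LDeriv Γ (n, t.downIdx 0)) : LDeriv Γ (n + 1, t)
  | fixl (Γ : LCtx) (n : ℕ) (bs : List LTm) (b : LTm) (cs : List ℕ)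
      (hlen : cs.length = bs.length) (hnd : cs.Nodup)
      (hfresh : ∀ c ∈ cs, (LTm.letrec bs b).usesCst c = false)
      (prems : ∀ i : Fin bs.length,
        LDeriv ((cs.map fun c => (n, c)) ++ Γ) (n, LTm.substC cs 0 (bs.get i)))
      (pbody : LDeriv ((cs.map fun c => (n, c)) ++ Γ) (n, LTm.substC cs 0 b)) :
      LDeriv Γ (n, .letrec bs b)

namespace LDeriv

/-- `D.usesA j` : some marked-assumption leaf of `D` refers to context entry `j`. -/
def usesA : ∀ {Γ s}, LDeriv Γ s → ℕ → Prop
  | _, _, .assum _ i, j => (i : ℕ) = j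
  | _, _, .ax _ _ _, _ => False
  | _, _, .lam _ _ _ D, j => D.usesA j
  | _, _, .app _ _ _ _ D0 D1, j => D0.usesA j ∨ D1.usesA j
  | _, _, .del _ _ _ _ D, j => D.usesA j
  | _, _, .fixl _ _ bs _ cs _ _ _ prems pbody, j =>
      (∃ i : Fin bs.length, (prems i).usesA (j + cs.length)) ∨ pbody.usesA (j + cs.length)

/-- `D.HoldsL m j` : every node of `D` whose subtree uses context entry `j`
has abstraction-prefix length at least `m`. -/
def HoldsL : ∀ {Γ s}, LDeriv Γ s → ℕ → ℕ → Prop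
  | _, _, .assum Γ i, m, j => ((i : ℕ) = j → m ≤ (Γ.get i).1)
  | _, _, .ax _ _ _, _, _ => True
  | _, _, .lam _ n _ D, m, j => (D.usesA j → m ≤ n) ∧ D.HoldsL m j
  | _, _, .app _ n _ _ D0 D1, m, j =>
      ((D0.usesA j ∨ D1.usesA j) → m ≤ n) ∧ D0.HoldsL m j ∧ D1.HoldsL m j
  | _, _, .del _ n _ _ D, m, j => (D.usesA j → m ≤ n + 1) ∧ D.HoldsL m j
  | _, _, .fixl _ n bs _ cs _ _ _ prems pbody, m, j =>
      (((∃ i : Fin bs.length, (prems i).usesA (j + cs.length)) ∨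
          pbody.usesA (j + cs.length)) → m ≤ n) ∧
      (∀ i : Fin bs.length, (prems i).HoldsL m (j + cs.length)) ∧
      pbody.HoldsL m (j + cs.length)

/-- The prefix-length side-condition on `FIX_letrec` instances: along threads
from the open marked assumptions introduced by the instance downwards, all
sequents have abstraction prefix at least as long as that of the assumption. -/
def PrefOK : ∀ {Γ s}, LDeriv Γ s → Prop
  | _, _, .assum _ _ => True
  | _, _, .ax _ _ _ => True
  | _, _, .lam _ _ _ D => D.PrefOK
  | _, _, .app _ _ _ _ D0 D1 => D0.PrefOK ∧ D1.PrefOK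
  | _, _, .del _ _ _ _ D => D.PrefOK
  | _, _, .fixl _ n bs _ cs _ _ _ prems pbody =>
      (∀ i : Fin bs.length,
        (prems i).PrefOK ∧ ∀ j < cs.length, (prems i).HoldsL n j) ∧
      pbody.PrefOK ∧ ∀ j < cs.length, pbody.HoldsL n j

end LDeriv

/-! ### Auxiliary development for Statement 14 -/

namespace LTm

/-- A size measure invariant under `substC` (ignores numeric payloads). -/
def size : LTm → ℕ
  | .var _ => 1
  | .lam t => size t + 1
  | .app t u => size t + size u + 1
  | .letrec bs b => (bs.attach.map fun x => size x.1).sum + size b + 1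
  | .cst _ => 1
decreasing_by
  all_goals simp_wf
  all_goals first
    | (have := List.sizeOf_lt_of_mem x.2; omega)
    | omega

theorem size_pos (t : LTm) : 0 < t.size := by
  cases t <;> simp [size]

theorem size_mem_le {x : LTm} {bs : List LTm} (h : x ∈ bs) :
    x.size ≤ (bs.attach.map fun y => y.1.size).sum := by
  have h1 : (bs.attach.map fun y => y.1.size) = bs.map size := by simp
  rw [h1]
  exact List.single_le_sum (fun _ _ => Nat.zero_le _) _ (List.mem_map_of_mem h)


theorem any_map_id {α : Type} (l : List α) (p : α → Bool) : (l.map p).any id = l.any p := by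
  induction l with
  | nil => rfl
  | cons a l ih => simp [List.any_cons, ih]

theorem all_map_id {α : Type} (l : List α) (p : α → Bool) : (l.map p).all id = l.all p := by
  induction l with
  | nil => rfl
  | cons a l ih => simp [List.all_cons, ih]

theorem usesCst_letrec (c : ℕ) (bs : List LTm) (b : LTm) :
    (LTm.letrec bs b).usesCst c = (bs.any (usesCst c) || b.usesCst c) := by
  have h1 : (bs.attach.map fun x => usesCst c x.1) = bs.map (usesCst c) := by simp
  rw [usesCst, h1, any_map_id]

theorem closedAt_letrec (d : ℕ) (bs : List LTm) (b : LTm) :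
    (LTm.letrec bs b).closedAt d
      = (bs.all (closedAt (d + bs.length)) && b.closedAt (d + bs.length)) := by
  have h1 : (bs.attach.map fun x => closedAt (d + bs.length) x.1)
      = bs.map (closedAt (d + bs.length)) := by simp
  rw [closedAt, h1, all_map_id]

theorem noCst_letrec (bs : List LTm) (b : LTm) :
    (LTm.letrec bs b).noCst = (bs.all noCst && b.noCst) := by
  have h1 : (bs.attach.map fun x => noCst x.1) = bs.map noCst := by simp
  rw [noCst, h1, all_map_id]

theorem substC_letrec (cs : List ℕ) (d : ℕ) (bs : List LTm) (b : LTm) :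
    substC cs d (LTm.letrec bs b)
      = .letrec (bs.map (substC cs (d + bs.length))) (substC cs (d + bs.length) b) := by
  have h1 : (bs.attach.map fun x => substC cs (d + bs.length) x.1)
      = bs.map (substC cs (d + bs.length)) := by simp
  rw [substC, h1]

theorem size_substC (cs : List ℕ) :
    ∀ (k : ℕ) (t : LTm), t.size ≤ k → ∀ d, (substC cs d t).size = t.size := by
  intro k
  induction k with
  | zero => intro t ht; have := size_pos t; omega
  | succ k ih =>
    intro t ht d
    cases t with
    | var v =>
      rw [substC]
      split_ifs <;> simp [size]
    | lam t =>
      rw [substC, size, size]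
      rw [ih t (by rw [size] at ht; omega) (d + 1)]
    | app t u =>
      rw [substC, size, size]
      rw [ih t (by rw [size] at ht; omega) d, ih u (by rw [size] at ht; omega) d]
    | letrec bs b =>
      rw [size] at ht
      rw [substC_letrec, size, size]
      have h1 : ((bs.map (substC cs (d + bs.length))).attach.map fun y => y.1.size)
          = bs.map (fun x => (substC cs (d + bs.length) x).size) := by
        simp [List.map_map, Function.comp_def]
      have h2 : (bs.attach.map fun y => y.1.size) = bs.map size := by simp
      rw [h2] at ht
      rw [h1, h2]
      have h3 : bs.map (fun x => (substC cs (d + bs.length) x).size) = bs.map size := by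
        apply List.map_congr_left
        intro x hx
        apply ih x ?_ _
        have hs := size_mem_le hx
        rw [h2] at hs
        have := size_pos b
        omega
      rw [h3, ih b (by have := size_pos b; omega) _]
    | cst c =>
      rw [substC]

theorem closedAt_substC (cs : List ℕ) :
    ∀ (k : ℕ) (t : LTm), t.size ≤ k → ∀ d m, d ≤ m →
      t.closedAt (m + cs.length) = true → (substC cs d t).closedAt m = true := by
  intro k
  induction k with
  | zero => intro t ht; have := size_pos t; omega
  | succ k ih =>
    intro t ht d m hdm hcl
    cases t with
    | var v =>
      rw [closedAt] at hcl
      rw [substC]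
      split_ifs with h1 h2
      · rw [closedAt]; simp only [decide_eq_true_eq] at *; omega
      · rw [closedAt]
      · rw [closedAt]; simp only [decide_eq_true_eq] at *; omega
    | lam t =>
      rw [closedAt] at hcl
      rw [substC, closedAt]
      apply ih t (by rw [size] at ht; omega) (d + 1) (m + 1) (by omega)
      have e : m + 1 + cs.length = m + cs.length + 1 := by omega
      rw [e]
      exact hcl
    | app t u =>
      rw [closedAt] at hcl
      rw [substC, closedAt]
      simp only [Bool.and_eq_true] at hcl ⊢
      exact ⟨ih t (by rw [size] at ht; omega) d m hdm hcl.1,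
        ih u (by rw [size] at ht; omega) d m hdm hcl.2⟩
    | letrec bs b =>
      rw [size] at ht
      have h2 : (bs.attach.map fun y => y.1.size) = bs.map size := by simp
      rw [h2] at ht
      rw [closedAt_letrec] at hcl
      rw [substC_letrec, closedAt_letrec]
      simp only [Bool.and_eq_true, List.all_eq_true, List.length_map] at hcl ⊢
      constructor
      · intro x hx
        obtain ⟨y, hy, rfl⟩ := List.mem_map.mp hx
        apply ih y ?_ (d + bs.length) (m + bs.length) (by omega)
        · have e : m + bs.length + cs.length = m + cs.length + bs.length := by omega
          rw [e]; exact hcl.1 y hy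
        · have hs := size_mem_le hy
          rw [h2] at hs
          have := size_pos b; omega
      · apply ih b (by have := size_pos b; omega) (d + bs.length) (m + bs.length) (by omega)
        have e : m + bs.length + cs.length = m + cs.length + bs.length := by omega
        rw [e]; exact hcl.2
    | cst c =>
      rw [substC, closedAt]

theorem usesCst_substC (cs : List ℕ) :
    ∀ (k : ℕ) (t : LTm), t.size ≤ k → ∀ d c,
      (substC cs d t).usesCst c = true → c ∈ cs ∨ t.usesCst c = true := by
  intro k
  induction k with
  | zero => intro t ht; have := size_pos t; omega
  | succ k ih =>
    intro t ht d c hu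
    cases t with
    | var v =>
      rw [substC] at hu
      split_ifs at hu with h1 h2
      · rw [usesCst] at hu; simp at hu
      · rw [usesCst] at hu
        simp only [beq_iff_eq] at hu
        subst hu
        exact Or.inl (List.get_mem _ _)
      · rw [usesCst] at hu; simp at hu
    | lam t =>
      rw [substC, usesCst] at hu
      rcases ih t (by rw [size] at ht; omega) _ _ hu with h | h
      · exact Or.inl h
      · exact Or.inr (by rw [usesCst]; exact h)
    | app t u =>
      rw [substC, usesCst] at hu
      simp only [Bool.or_eq_true] at hu
      rcases hu with hu | hu
      · rcases ih t (by rw [size] at ht; omega) _ _ hu with h | h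
        · exact Or.inl h
        · exact Or.inr (by rw [usesCst]; simp [h])
      · rcases ih u (by rw [size] at ht; omega) _ _ hu with h | h
        · exact Or.inl h
        · exact Or.inr (by rw [usesCst]; simp [h])
    | letrec bs b =>
      rw [size] at ht
      have h2 : (bs.attach.map fun y => y.1.size) = bs.map size := by simp
      rw [h2] at ht
      rw [substC_letrec, usesCst_letrec] at hu
      simp only [Bool.or_eq_true, List.any_eq_true] at hu
      rcases hu with ⟨x, hx, hux⟩ | hu
      · obtain ⟨y, hy, rfl⟩ := List.mem_map.mp hx
        have hsy : y.size ≤ k := by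
          have hs := size_mem_le hy; rw [h2] at hs; have := size_pos b; omega
        rcases ih y hsy _ _ hux with h | h
        · exact Or.inl h
        · refine Or.inr ?_
          rw [usesCst_letrec]
          simp only [Bool.or_eq_true, List.any_eq_true]
          exact Or.inl ⟨y, hy, h⟩
      · rcases ih b (by have := size_pos b; omega) _ _ hu with h | h
        · exact Or.inl h
        · refine Or.inr ?_
          rw [usesCst_letrec]
          simp [h]
    | cst c' =>
      rw [substC] at hu
      exact Or.inr hu

theorem cst_bound :
    ∀ (k : ℕ) (t : LTm), t.size ≤ k → ∃ N, ∀ c, N ≤ c → t.usesCst c = false := by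
  intro k
  induction k with
  | zero => intro t ht; have := size_pos t; omega
  | succ k ih =>
    intro t ht
    cases t with
    | var v => exact ⟨0, fun c _ => by rw [usesCst]⟩
    | lam t =>
      obtain ⟨N, hN⟩ := ih t (by rw [size] at ht; omega)
      exact ⟨N, fun c hc => by rw [usesCst]; exact hN c hc⟩
    | app t u =>
      obtain ⟨N1, h1⟩ := ih t (by rw [size] at ht; omega)
      obtain ⟨N2, h2⟩ := ih u (by rw [size] at ht; omega)
      refine ⟨max N1 N2, fun c hc => ?_⟩
      rw [usesCst]
      simp [h1 c (by omega), h2 c (by omega)]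
    | letrec bs b =>
      rw [size] at ht
      have h2 : (bs.attach.map fun y => y.1.size) = bs.map size := by simp
      rw [h2] at ht
      have hbs : ∀ x ∈ bs, ∃ N, ∀ c, N ≤ c → x.usesCst c = false := by
        intro x hx
        apply ih x
        have hs := size_mem_le hx; rw [h2] at hs; have := size_pos b; omega
      choose f hf using hbs
      obtain ⟨Nb, hNb⟩ := ih b (by have := size_pos b; omega)
      refine ⟨max Nb ((bs.attach.map fun x => f x.1 x.2).sum), fun c hc => ?_⟩
      rw [usesCst_letrec]
      simp only [Bool.or_eq_false_iff]
      constructor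
      · rw [List.any_eq_false]
        intro x hx
        rw [Bool.not_eq_true]
        have hmem : f x hx ∈ bs.attach.map fun y => f y.1 y.2 :=
          List.mem_map.mpr ⟨⟨x, hx⟩, List.mem_attach _ _, rfl⟩
        have hle := List.single_le_sum
          (l := bs.attach.map fun y => f y.1 y.2) (fun _ _ => Nat.zero_le _) _ hmem
        exact hf x hx c (by omega)
      · exact hNb c (by omega)
    | cst c' =>
      exact ⟨c' + 1, fun c hc => by rw [usesCst]; simp; omega⟩

theorem noCst_usesCst :
    ∀ (k : ℕ) (t : LTm), t.size ≤ k → t.noCst = true → ∀ c, t.usesCst c = false := by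
  intro k
  induction k with
  | zero => intro t ht; have := size_pos t; omega
  | succ k ih =>
    intro t ht hn c
    cases t with
    | var v => rw [usesCst]
    | lam t =>
      rw [noCst] at hn
      rw [usesCst]
      exact ih t (by rw [size] at ht; omega) hn c
    | app t u =>
      rw [noCst] at hn
      simp only [Bool.and_eq_true] at hn
      rw [usesCst]
      simp [ih t (by rw [size] at ht; omega) hn.1 c, ih u (by rw [size] at ht; omega) hn.2 c]
    | letrec bs b =>
      rw [size] at ht
      have h2 : (bs.attach.map fun y => y.1.size) = bs.map size := by simp
      rw [h2] at ht
      rw [noCst_letrec] at hn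
      simp only [Bool.and_eq_true, List.all_eq_true] at hn
      rw [usesCst_letrec]
      simp only [Bool.or_eq_false_iff]
      constructor
      · rw [List.any_eq_false]
        intro x hx
        rw [Bool.not_eq_true]
        apply ih x ?_ (hn.1 x hx) c
        have hs := size_mem_le hx; rw [h2] at hs; have := size_pos b; omega
      · exact ih b (by have := size_pos b; omega) hn.2 c
    | cst c' =>
      rw [noCst] at hn
      simp at hn

end LTm

namespace LDeriv

theorem usesA_lt : ∀ {Γ s} (D : LDeriv Γ s) (j : ℕ), D.usesA j → j < Γ.length := by
  intro Γ s D
  induction D with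
  | assum Γ i =>
    intro j h
    rw [usesA] at h
    exact h ▸ i.isLt
  | ax Γ n hn => intro j h; rw [usesA] at h; exact absurd h not_false
  | lam Γ n t D ih => intro j h; rw [usesA] at h; exact ih j h
  | app Γ n t u D0 D1 ih0 ih1 =>
    intro j h
    rw [usesA] at h
    rcases h with h | h
    · exact ih0 j h
    · exact ih1 j h
  | del Γ n t hocc D ih => intro j h; rw [usesA] at h; exact ih j h
  | fixl Γ n bs b cs hlen hnd hfresh prems pbody ihp ihb =>
    intro j h
    rw [usesA] at h
    have hlt : j + cs.length < ((cs.map fun c => (n, c)) ++ Γ).length := by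
      rcases h with ⟨i, hi⟩ | hb
      · exact ihp i _ hi
      · exact ihb _ hb
    simp only [List.length_append, List.length_map] at hlt
    omega

theorem notUses_HoldsL : ∀ {Γ s} (D : LDeriv Γ s) (m j : ℕ), ¬ D.usesA j → D.HoldsL m j := by
  intro Γ s D
  induction D with
  | assum Γ i =>
    intro m j h
    rw [usesA] at h
    rw [HoldsL]
    intro he
    exact absurd he h
  | ax Γ n hn => intro m j h; rw [HoldsL]; trivial
  | lam Γ n t D ih =>
    intro m j h
    rw [usesA] at h
    rw [HoldsL]
    exact ⟨fun hu => absurd hu h, ih m j h⟩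
  | app Γ n t u D0 D1 ih0 ih1 =>
    intro m j h
    rw [usesA] at h
    rw [HoldsL]
    push_neg at h
    exact ⟨fun hu => absurd hu (by rw [not_or]; exact h), ih0 m j h.1, ih1 m j h.2⟩
  | del Γ n t hocc D ih =>
    intro m j h
    rw [usesA] at h
    rw [HoldsL]
    exact ⟨fun hu => absurd hu h, ih m j h⟩
  | fixl Γ n bs b cs hlen hnd hfresh prems pbody ihp ihb =>
    intro m j h
    rw [usesA] at h
    push_neg at h
    rw [HoldsL]
    refine ⟨fun hu => absurd hu (by rw [not_or]; push_neg; exact h), ?_, ?_⟩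
    · intro i
      exact ihp i m _ (h.1 i)
    · exact ihb m _ h.2

end LDeriv

theorem varDeriv_ex (Γ : LCtx) :
    ∀ (k n : ℕ), k < n → ∃ D : LDeriv Γ (n, .var k), D.PrefOK ∧ ∀ j, ¬ D.usesA j := by
  intro k
  induction k with
  | zero =>
    intro n hn
    refine ⟨.ax Γ n hn, ?_, ?_⟩
    · rw [LDeriv.PrefOK]; trivial
    · intro j; rw [LDeriv.usesA]; exact not_false
  | succ k ih =>
    intro n hn
    obtain ⟨n', rfl⟩ : ∃ n', n = n' + 1 := ⟨n - 1, by omega⟩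
    have ihs : ∃ D : LDeriv Γ (n', LTm.downIdx 0 (.var (k + 1))),
        D.PrefOK ∧ ∀ j, ¬ D.usesA j := by
      have e : LTm.downIdx 0 (.var (k + 1)) = .var k := by rw [LTm.downIdx]; simp
      rw [e]
      exact ih n' (by omega)
    obtain ⟨D0, hp, hu⟩ := ihs
    refine ⟨.del Γ n' (.var (k + 1)) (by rw [LTm.occursIdx]; simp) D0, ?_, ?_⟩
    · rw [LDeriv.PrefOK]; exact hp
    · intro j; rw [LDeriv.usesA]; exact hu j

theorem cstDeriv_ex (Γ : LCtx) (i : Fin Γ.length) :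
    ∀ d : ℕ, ∃ D : LDeriv Γ ((Γ.get i).1 + d, .cst (Γ.get i).2),
      D.PrefOK ∧ (∀ j, D.usesA j → j = ↑i) ∧
      ∀ m j, (↑i = j → m ≤ (Γ.get i).1) → D.HoldsL m j := by
  intro d
  induction d with
  | zero =>
    refine ⟨.assum Γ i, ?_, ?_, ?_⟩
    · rw [LDeriv.PrefOK]; trivial
    · intro j h; rw [LDeriv.usesA] at h; exact h.symm
    · intro m j hj; rw [LDeriv.HoldsL]; intro he; exact hj he
  | succ d ih =>
    have ihs : ∃ D : LDeriv Γ ((Γ.get i).1 + d, LTm.downIdx 0 (.cst (Γ.get i).2)),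
        D.PrefOK ∧ (∀ j, D.usesA j → j = ↑i) ∧
        ∀ m j, (↑i = j → m ≤ (Γ.get i).1) → D.HoldsL m j := by
      rw [show LTm.downIdx 0 (.cst (Γ.get i).2) = .cst (Γ.get i).2 from by rw [LTm.downIdx]]
      exact ih
    obtain ⟨D0, hp, hu, hh⟩ := ihs
    refine ⟨.del Γ ((Γ.get i).1 + d) (.cst (Γ.get i).2) (by rw [LTm.occursIdx]) D0, ?_, ?_, ?_⟩
    · rw [LDeriv.PrefOK]; exact hp
    · intro j h; rw [LDeriv.usesA] at h; exact hu j h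
    · intro m j hj
      rw [LDeriv.HoldsL]
      refine ⟨?_, hh m j hj⟩
      intro huse
      have := hj (hu j huse).symm
      omega

theorem main_ex : ∀ (k : ℕ) (t : LTm) (n : ℕ) (Γ : LCtx),
    t.size ≤ k →
    (∀ p ∈ Γ, p.1 ≤ n) →
    t.closedAt n = true →
    (∀ c, t.usesCst c = true → ∃ j : Fin Γ.length, (Γ.get j).2 = c) →
    ∃ D : LDeriv Γ (n, t), D.PrefOK ∧
      ∀ (j m : ℕ), (∀ h : j < Γ.length, m ≤ (Γ.get ⟨j, h⟩).1) → D.HoldsL m j := by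
  intro k
  induction k with
  | zero => intro t n Γ ht; have := LTm.size_pos t; omega
  | succ k ih =>
    intro t n Γ ht hΓ hcl hcst
    cases t with
    | var v =>
      rw [LTm.closedAt] at hcl
      simp only [decide_eq_true_eq] at hcl
      obtain ⟨D, hp, hu⟩ := varDeriv_ex Γ v n hcl
      exact ⟨D, hp, fun j m _ => D.notUses_HoldsL m j (hu j)⟩
    | cst c =>
      obtain ⟨i, hi⟩ := hcst c (by rw [LTm.usesCst]; simp)
      have hle : (Γ.get i).1 ≤ n := hΓ _ (List.get_mem _ _)
      have e : (Γ.get i).1 + (n - (Γ.get i).1) = n := by omega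
      rw [← hi, ← e]
      obtain ⟨D, hp, _, hh⟩ := cstDeriv_ex Γ i (n - (Γ.get i).1)
      refine ⟨D, hp, ?_⟩
      intro j m hj
      apply hh
      intro hij
      subst hij
      exact hj i.isLt
    | lam t0 =>
      rw [LTm.closedAt] at hcl
      obtain ⟨D0, hp, hh⟩ := ih t0 (n + 1) Γ (by rw [LTm.size] at ht; omega)
        (fun p hp' => le_trans (hΓ p hp') (by omega)) hcl
        (fun c hc => hcst c (by rw [LTm.usesCst]; exact hc))
      refine ⟨.lam Γ n t0 D0, ?_, ?_⟩
      · rw [LDeriv.PrefOK]; exact hp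
      · intro j m hj
        rw [LDeriv.HoldsL]
        refine ⟨?_, hh j m hj⟩
        intro huse
        have hjl : j < Γ.length := D0.usesA_lt j huse
        calc m ≤ (Γ.get ⟨j, hjl⟩).1 := hj hjl
          _ ≤ n := hΓ _ (List.get_mem _ _)
    | app t0 u0 =>
      rw [LTm.closedAt] at hcl
      simp only [Bool.and_eq_true] at hcl
      obtain ⟨D0, hp0, hh0⟩ := ih t0 n Γ (by rw [LTm.size] at ht; omega) hΓ hcl.1
        (fun c hc => hcst c (by rw [LTm.usesCst]; simp [hc]))
      obtain ⟨D1, hp1, hh1⟩ := ih u0 n Γ (by rw [LTm.size] at ht; omega) hΓ hcl.2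
        (fun c hc => hcst c (by rw [LTm.usesCst]; simp [hc]))
      refine ⟨.app Γ n t0 u0 D0 D1, ?_, ?_⟩
      · rw [LDeriv.PrefOK]; exact ⟨hp0, hp1⟩
      · intro j m hj
        rw [LDeriv.HoldsL]
        refine ⟨?_, hh0 j m hj, hh1 j m hj⟩
        intro huse
        have hjl : j < Γ.length := by
          rcases huse with h | h
          · exact D0.usesA_lt j h
          · exact D1.usesA_lt j h
        calc m ≤ (Γ.get ⟨j, hjl⟩).1 := hj hjl
          _ ≤ n := hΓ _ (List.get_mem _ _)
    | letrec bs b =>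
      rw [LTm.size] at ht
      have hmsz : (bs.attach.map fun y => y.1.size) = bs.map LTm.size := by simp
      rw [hmsz] at ht
      obtain ⟨N, hN⟩ := LTm.cst_bound (LTm.letrec bs b).size (LTm.letrec bs b) le_rfl
      have hlen : (List.range' N bs.length).length = bs.length := by simp
      have hnd : (List.range' N bs.length).Nodup := List.nodup_range' (s := N) (n := bs.length)
      have hfresh : ∀ c ∈ List.range' N bs.length, (LTm.letrec bs b).usesCst c = false := by
        intro c hcmem
        apply hN
        rw [List.mem_range'] at hcmem
        obtain ⟨ii, _, rfl⟩ := hcmem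
        omega
      have hΓ'len : (((List.range' N bs.length).map fun c => (n, c)) ++ Γ).length
          = bs.length + Γ.length := by simp
      have hget1 : ∀ (j : ℕ) (h : j < bs.length)
          (h' : j < (((List.range' N bs.length).map fun c => (n, c)) ++ Γ).length),
          (((List.range' N bs.length).map fun c => (n, c)) ++ Γ).get ⟨j, h'⟩ = (n, N + j) := by
        intro j h h'
        rw [List.get_eq_getElem, List.getElem_append_left (by simpa using h),
          List.getElem_map, List.getElem_range']
        simp
      have hget2 : ∀ (j : ℕ) (h : j < Γ.length)
          (h' : j + bs.length < (((List.range' N bs.length).map fun c => (n, c)) ++ Γ).length),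
          (((List.range' N bs.length).map fun c => (n, c)) ++ Γ).get ⟨j + bs.length, h'⟩
            = Γ.get ⟨j, h⟩ := by
        intro j h h'
        rw [List.get_eq_getElem, List.getElem_append_right (by simp)]
        simp [List.get_eq_getElem]
      rw [LTm.closedAt_letrec] at hcl
      simp only [Bool.and_eq_true, List.all_eq_true] at hcl
      have key : ∀ t0 : LTm, t0.size ≤ k → t0.closedAt (n + bs.length) = true →
          (∀ c, t0.usesCst c = true → (LTm.letrec bs b).usesCst c = true) →
          ∃ D : LDeriv (((List.range' N bs.length).map fun c => (n, c)) ++ Γ)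
              (n, LTm.substC (List.range' N bs.length) 0 t0), D.PrefOK ∧
            ∀ (j m : ℕ),
              (∀ h : j < (((List.range' N bs.length).map fun c => (n, c)) ++ Γ).length,
                m ≤ ((((List.range' N bs.length).map fun c => (n, c)) ++ Γ).get ⟨j, h⟩).1) →
              D.HoldsL m j := by
        intro t0 hs hc0 hsub
        apply ih (LTm.substC (List.range' N bs.length) 0 t0) n
          (((List.range' N bs.length).map fun c => (n, c)) ++ Γ)
        · rw [LTm.size_substC (List.range' N bs.length) k t0 hs 0]; exact hs
        · intro p hp
          rcases List.mem_append.mp hp with h | h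
          · obtain ⟨c, _, rfl⟩ := List.mem_map.mp h
            exact le_rfl
          · exact hΓ p h
        · apply LTm.closedAt_substC (List.range' N bs.length) k t0 hs 0 n (by omega)
          rw [hlen]
          exact hc0
        · intro c hcu
          rcases LTm.usesCst_substC (List.range' N bs.length) k t0 hs 0 c hcu with hc | hc
          · rw [List.mem_range'] at hc
            obtain ⟨ii, hii, rfl⟩ := hc
            have hii' : ii < (((List.range' N bs.length).map fun c => (n, c)) ++ Γ).length := by
              rw [hΓ'len]; omega
            refine ⟨⟨ii, hii'⟩, ?_⟩
            rw [hget1 ii hii hii']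
            simp
          · obtain ⟨j0, hj0⟩ := hcst c (hsub c hc)
            have h' : ↑j0 + bs.length
                < (((List.range' N bs.length).map fun c => (n, c)) ++ Γ).length := by
              rw [hΓ'len]; omega
            refine ⟨⟨↑j0 + bs.length, h'⟩, ?_⟩
            rw [hget2 ↑j0 j0.isLt h']
            exact hj0
      have hprem : ∀ i : Fin bs.length,
          ∃ D : LDeriv (((List.range' N bs.length).map fun c => (n, c)) ++ Γ)
              (n, LTm.substC (List.range' N bs.length) 0 (bs.get i)), D.PrefOK ∧
            ∀ (j m : ℕ),
              (∀ h : j < (((List.range' N bs.length).map fun c => (n, c)) ++ Γ).length,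
                m ≤ ((((List.range' N bs.length).map fun c => (n, c)) ++ Γ).get ⟨j, h⟩).1) →
              D.HoldsL m j := by
        intro i
        have hmem : bs.get i ∈ bs := List.get_mem bs i
        apply key
        · have hs := LTm.size_mem_le hmem
          rw [hmsz] at hs
          have := LTm.size_pos b
          omega
        · exact hcl.1 _ hmem
        · intro c hc
          rw [LTm.usesCst_letrec]
          simp only [Bool.or_eq_true, List.any_eq_true]
          exact Or.inl ⟨bs.get i, hmem, hc⟩
      have hbody : ∃ D : LDeriv (((List.range' N bs.length).map fun c => (n, c)) ++ Γ)
          (n, LTm.substC (List.range' N bs.length) 0 b), D.PrefOK ∧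
            ∀ (j m : ℕ),
              (∀ h : j < (((List.range' N bs.length).map fun c => (n, c)) ++ Γ).length,
                m ≤ ((((List.range' N bs.length).map fun c => (n, c)) ++ Γ).get ⟨j, h⟩).1) →
              D.HoldsL m j := by
        apply key
        · have := LTm.size_pos b; omega
        · exact hcl.2
        · intro c hc
          rw [LTm.usesCst_letrec]
          simp [hc]
      choose Dp hp1 hp2 using hprem
      obtain ⟨Db, hb1, hb2⟩ := hbody
      refine ⟨.fixl Γ n bs b (List.range' N bs.length) hlen hnd hfresh Dp Db, ?_, ?_⟩
      · rw [LDeriv.PrefOK]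
        refine ⟨fun i => ⟨hp1 i, ?_⟩, hb1, ?_⟩
        · intro j hj
          rw [hlen] at hj
          apply hp2 i j n
          intro h
          rw [hget1 j hj h]
        · intro j hj
          rw [hlen] at hj
          apply hb2 j n
          intro h
          rw [hget1 j hj h]
      · intro j m hj
        rw [LDeriv.HoldsL]
        have hcond : ∀ h : j + bs.length
            < (((List.range' N bs.length).map fun c => (n, c)) ++ Γ).length,
            m ≤ ((((List.range' N bs.length).map fun c => (n, c)) ++ Γ).get
              ⟨j + bs.length, h⟩).1 := by
          intro h
          have hjΓ : j < Γ.length := by rw [hΓ'len] at h; omega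
          rw [hget2 j hjΓ h]
          exact hj hjΓ
        rw [hlen]
        refine ⟨?_, fun i => hp2 i (j + bs.length) m hcond, hb2 (j + bs.length) m hcond⟩
        intro huse
        have hlt : j + bs.length
            < (((List.range' N bs.length).map fun c => (n, c)) ++ Γ).length := by
          rcases huse with ⟨i, hi⟩ | hb
          · exact (Dp i).usesA_lt _ hi
          · exact Db.usesA_lt _ hb
        rw [hΓ'len] at hlt
        have hjΓ : j < Γ.length := by omega
        calc m ≤ (Γ.get ⟨j, hjΓ⟩).1 := hj hjΓ
          _ ≤ n := hΓ _ (List.get_mem _ _)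

/-- For every (closed, constant-free) λletrec-term `L`, the
empty-prefix sequent `() L` is derivable in the unguarded proof system
`ug-Reg⁺_letrec`, i.e. there is a closed derivation, satisfying the
prefix-length side-condition of `FIX_letrec`, with conclusion `() L`
(constructed deterministically bottom-up following the term structure). -/
theorem stmt14 (L : LTm) (hc : L.closedAt 0 = true) (hn : L.noCst = true) :
    ∃ D : LDeriv [] ((0 : ℕ), L), D.PrefOK := by
  obtain ⟨D, hp, _⟩ := main_ex L.size L 0 [] le_rfl (by simp) hc
    (fun c hcc => absurd hcc (by rw [LTm.noCst_usesCst L.size L le_rfl hn c]; simp))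
  exact ⟨D, hp⟩
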